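/- arXiv:2102.10517 — 3 statements merged into one kernel-verified Lean document; each statement's English description precedes it below -/
import Mathlib

section
/- Let h ≥ 1, m ≥ 1, π a permutation of {1,…,m}, and c_1,…,c_m ∈ Z_{2^h}. Define the generalized Boolean function f(v_1,…,v_m) = 2^{h−1}·Σ_{α=1}^{m−1} v_{π(α)} v_{π(α+1)} + Σ_{α=1}^{m} c_α v_α (mod 2^h). Then for all constants c, c' ∈ Z_{2^h}, the pair (ψ(f + c), ψ(f + 2^{h−1} v_{π(1)} + c')) forms a (2, 2^m) Golay complementary pair: A(ψ(f+c))(u) + A(ψ(f + 2^{h−1} v_{π(1)} + c'))(u) = 0 for every integer u with 0 < |u| < 2^m. -/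
open Finset

/-- `ω_λ = exp(2π√(-1)/λ)`. -/
noncomputable def omg (lam : ℕ) : ℂ := Complex.exp (2 * Real.pi * Complex.I / lam)

/-- Aperiodic cross-correlation of two length-`L` complex sequences at shift `u`. -/
noncomputable def aCorr (L : ℕ) (a b : ℕ → ℂ) (u : ℤ) : ℂ :=
  if 0 ≤ u then
    ∑ i ∈ Finset.range (L - u.toNat), a (i + u.toNat) * (starRingEnd ℂ) (b i)
  else
    ∑ i ∈ Finset.range (L - (-u).toNat), a i * (starRingEnd ℂ) (b (i + (-u).toNat))

/-- Cross-correlation sum of two `M × L` codes (matrices given row-wise). -/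
noncomputable def codeCorr (M L : ℕ) (C D : ℕ → ℕ → ℂ) (u : ℤ) : ℂ :=
  ∑ ν ∈ Finset.range M, aCorr L (C ν) (D ν) u

/-- Base-`p` digit vector of `γ` (digit `j` is `γ / p^j % p`). -/
def dig (p m γ : ℕ) : Fin m → ℕ := fun j => γ / p ^ (j : ℕ) % p

/-- The quadratic multivariable function
`f(v) = (λ/p)·Σ_{β=1}^{m-1} v_{π(β)} v_{π(β+1)} + Σ_{β=1}^{m} c_β v_β` (as an integer). -/
def fQuad (p m lam : ℕ) (π : Equiv.Perm (Fin m)) (cf : Fin m → ZMod lam)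
    (v : Fin m → ℕ) : ℤ :=
  ((lam / p : ℕ) : ℤ) * ∑ β : Fin (m - 1),
      (v (π (Fin.castLE (Nat.sub_le m 1) β)) : ℤ) *
        (v (π ⟨(β : ℕ) + 1, by have := β.isLt; omega⟩) : ℤ)
    + ∑ β : Fin m, ((cf β).val : ℤ) * (v β : ℤ)

/-- `a_t^α(v) = f(v) + (λ/p)·α·v_{π(1)} + (λ/p)·t·v_{π(m)} + c` (as an integer). -/
def aFun (p m lam : ℕ) (hm : 0 < m) (π : Equiv.Perm (Fin m)) (cf : Fin m → ZMod lam)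
    (c : ZMod lam) (t α : ℕ) (v : Fin m → ℕ) : ℤ :=
  fQuad p m lam π cf v
    + ((lam / p : ℕ) : ℤ) * (α : ℤ) * (v (π ⟨0, hm⟩) : ℤ)
    + ((lam / p : ℕ) : ℤ) * (t : ℤ) * (v (π ⟨m - 1, by omega⟩) : ℤ)
    + ((c.val : ℕ) : ℤ)

/-- The code `C_t^p`: the `p × p^m` matrix whose `α`-th row is `ψ(a_t^α)`. -/
noncomputable def codeC (p m lam : ℕ) (hm : 0 < m) (π : Equiv.Perm (Fin m))
    (cf : Fin m → ZMod lam) (c : ZMod lam) (t : ℕ) : ℕ → ℕ → ℂ :=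
  fun α γ => omg lam ^ (aFun p m lam hm π cf c t α (dig p m γ))

/-- flip bit `k` of `γ`. -/
def flipB (k γ : ℕ) : ℕ := if γ / 2^k % 2 = 0 then γ + 2^k else γ - 2^k

lemma add_pow_digits {k m γ : ℕ} (hk : k < m) (hγ : γ < 2^m) (hb : γ / 2^k % 2 = 0) :
    γ + 2^k < 2^m ∧ ∀ j : ℕ, (γ + 2^k) / 2^j % 2 = if j = k then 1 else γ / 2^j % 2 := by
  have h2k : (0:ℕ) < 2^k := Nat.pow_pos (n := k) (by norm_num)
  have h2k1 : (0:ℕ) < 2^(k+1) := Nat.pow_pos (n := k+1) (by norm_num)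
  -- R := γ % 2^(k+1) < 2^k
  have hRdiv : γ % 2^(k+1) / 2^k = 0 := by
    have := Nat.mod_mul_right_div_self γ (2^k) 2
    rw [← pow_succ] at this
    have h1 : γ / 2^k % 2 < 2 := Nat.mod_lt _ (by norm_num)
    omega
  have hR : γ % 2^(k+1) < 2^k := by
    have := Nat.div_eq_of_lt (a := γ % 2^(k+1)) (b := 2^k)
    rcases Nat.lt_or_ge (γ % 2^(k+1)) (2^k) with h | h
    · exact h
    · exfalso; have := Nat.div_pos h h2k; omega
  have hdecomp : γ = 2^(k+1) * (γ / 2^(k+1)) + γ % 2^(k+1) := (Nat.div_add_mod γ _).symm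
  have hQ : γ / 2^(k+1) < 2^(m-k-1) := by
    rw [Nat.div_lt_iff_lt_mul h2k1]
    calc γ < 2^m := hγ
    _ = 2^(m-k-1) * 2^(k+1) := by rw [← pow_add]; congr 1; omega
  have hlt : γ + 2^k < 2^m := by
    have h1 : γ + 2^k < 2^(k+1) * (γ / 2^(k+1) + 1) := by
      have e1 : 2^(k+1) * (γ / 2^(k+1) + 1) = 2^(k+1) * (γ / 2^(k+1)) + 2^(k+1) := by ring
      have e2 : 2^(k+1) = 2^k * 2 := by rw [pow_succ]
      omega
    have h2 : 2^(k+1) * (γ / 2^(k+1) + 1) ≤ 2^(k+1) * 2^(m-k-1) :=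
      Nat.mul_le_mul_left _ hQ
    have h3 : 2^(k+1) * 2^(m-k-1) = 2^m := by rw [← pow_add]; congr 1; omega
    omega
  refine ⟨hlt, fun j => ?_⟩
  rcases lt_trichotomy j k with hj | hj | hj
  · -- j < k
    rw [if_neg (by omega)]
    have hpow : 2^k = 2^(k-j) * 2^j := by rw [← pow_add]; congr 1; omega
    rw [hpow, Nat.add_mul_div_right _ _ (Nat.pow_pos (n := j) (a := 2) (by norm_num))]
    have : 2^(k-j) = 2 * 2^(k-j-1) := by
      rw [← pow_succ']; congr 1; omega
    omega
  · subst hj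
    rw [if_pos rfl, Nat.add_div_right _ h2k]
    omega
  · -- j > k
    rw [if_neg (by omega)]
    have key : (γ + 2^k) / 2^(k+1) = γ / 2^(k+1) := by
      conv_lhs => rw [hdecomp]
      rw [add_assoc, Nat.mul_add_div h2k1]
      have hlt2 : γ % 2^(k+1) + 2^k < 2^(k+1) := by
        have : 2^(k+1) = 2^k * 2 := by rw [pow_succ]
        omega
      rw [Nat.div_eq_of_lt hlt2]; omega
    have hsplit : ∀ x : ℕ, x / 2^j = x / 2^(k+1) / 2^(j-k-1) := by
      intro x
      rw [Nat.div_div_eq_div_mul, ← pow_add]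
      congr 2; omega
    rw [hsplit, hsplit, key]

lemma le_of_div_pos {k γ : ℕ} (h : 1 ≤ γ / 2^k) : 2^k ≤ γ :=
  (Nat.one_le_div_iff (Nat.pow_pos (n := k) (by norm_num))).mp h

lemma flipB_spec {k m γ : ℕ} (hk : k < m) (hγ : γ < 2^m) :
    flipB k γ < 2^m ∧
      ∀ j : ℕ, flipB k γ / 2^j % 2 = if j = k then 1 - γ / 2^k % 2 else γ / 2^j % 2 := by
  have h2k : (0:ℕ) < 2^k := Nat.pow_pos (n := k) (by norm_num)
  have hb2 : γ / 2^k % 2 < 2 := Nat.mod_lt _ (by norm_num)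
  rcases Nat.eq_zero_or_pos (γ / 2^k % 2) with hb | hb
  · obtain ⟨h1, h2⟩ := add_pow_digits hk hγ hb
    rw [flipB, if_pos hb]
    exact ⟨h1, fun j => by rw [h2 j, hb]⟩
  · have hb1 : γ / 2^k % 2 = 1 := by omega
    have hq1 : 1 ≤ γ / 2^k := by
      generalize γ / 2^k = t at hb1 ⊢; omega
    have hγk : 2^k ≤ γ := le_of_div_pos hq1
    have he2 : 2^k ≤ 2^k * (γ / 2^k) := Nat.le_mul_of_pos_right _ hq1
    have hqr := Nat.div_add_mod γ (2^k)
    have hrlt : γ % 2^k < 2^k := Nat.mod_lt _ h2k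
    have hB : 2^k * (γ / 2^k - 1) = 2^k * (γ / 2^k) - 2^k := by
      rw [Nat.mul_sub, mul_one]
    have hdec : γ - 2^k = 2^k * (γ / 2^k - 1) + γ % 2^k := by omega
    have hdiv : (γ - 2^k) / 2^k = γ / 2^k - 1 := by
      rw [hdec, Nat.mul_add_div h2k, Nat.div_eq_of_lt hrlt, add_zero]
    have hb0 : (γ - 2^k) / 2^k % 2 = 0 := by
      rw [hdiv]; generalize γ / 2^k = t at hb1 ⊢; omega
    obtain ⟨h1, h2⟩ := add_pow_digits hk (by omega : γ - 2^k < 2^m) hb0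
    have he : γ - 2^k + 2^k = γ := by omega
    rw [he] at h1 h2
    rw [flipB, if_neg (by omega)]
    refine ⟨by omega, fun j => ?_⟩
    have := h2 j
    by_cases hj : j = k
    · subst hj; rw [if_pos rfl, hb0, hb1]
    · rw [if_neg hj] at this ⊢; omega

lemma flipB_add {k γ n : ℕ} (hbit : γ / 2^k % 2 = (γ + n) / 2^k % 2) :
    flipB k (γ + n) = flipB k γ + n := by
  rw [flipB, flipB, ← hbit]
  by_cases hc : γ / 2^k % 2 = 0
  · rw [if_pos hc, if_pos hc]; omega
  · rw [if_neg hc, if_neg hc]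
    have h1 : 1 ≤ γ / 2^k := by
      generalize γ / 2^k = t at hc ⊢; omega
    have := le_of_div_pos h1
    omega

lemma flipB_flip {k m γ : ℕ} (hk : k < m) (hγ : γ < 2^m) : flipB k (flipB k γ) = γ := by
  have hs := (flipB_spec hk hγ).2 k
  rw [if_pos rfl] at hs
  have hb2 : γ / 2^k % 2 < 2 := Nat.mod_lt _ (by norm_num)
  by_cases hb : γ / 2^k % 2 = 0
  · have h1 : flipB k γ = γ + 2^k := by rw [flipB, if_pos hb]
    rw [flipB, hs, hb, if_neg (by omega), h1]
    omega
  · have hb1 : γ / 2^k % 2 = 1 := by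
      generalize γ / 2^k = t at hb ⊢; omega
    have hγk : 2^k ≤ γ := le_of_div_pos (by
      generalize γ / 2^k = t at hb1 ⊢; omega)
    have h1 : flipB k γ = γ - 2^k := by rw [flipB, if_neg hb]
    rw [flipB, hs, hb1, if_pos (by omega), h1]
    omega

lemma flipB_ne {k m γ : ℕ} (hk : k < m) (hγ : γ < 2^m) : flipB k γ ≠ γ := by
  intro hcontra
  have hs := (flipB_spec hk hγ).2 k
  rw [if_pos rfl, hcontra] at hs
  generalize γ / 2^k = t at hs; omega

lemma dig_injective {m γ δ : ℕ} (hγ : γ < 2^m) (hδ : δ < 2^m)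
    (hd : dig 2 m γ = dig 2 m δ) : γ = δ := by
  apply Nat.eq_of_testBit_eq
  intro i
  by_cases hi : i < m
  · rw [Nat.testBit_eq_decide_div_mod_eq, Nat.testBit_eq_decide_div_mod_eq]
    have := congrFun hd ⟨i, hi⟩
    simp only [dig] at this
    rw [this]
  · rw [Nat.testBit_eq_false_of_lt (lt_of_lt_of_le hγ (Nat.pow_le_pow_right (by norm_num) (by omega))),
        Nat.testBit_eq_false_of_lt (lt_of_lt_of_le hδ (Nat.pow_le_pow_right (by norm_num) (by omega)))]

lemma omg_ne_zero (lam : ℕ) : omg lam ≠ 0 := Complex.exp_ne_zero _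

lemma omg_pow_half {h : ℕ} (hh : 0 < h) : omg (2^h) ^ ((2:ℤ)^(h-1)) = -1 := by
  have hcast : ((2:ℤ)^(h-1)) = ((2^(h-1) : ℕ) : ℤ) := by push_cast; ring
  rw [hcast, zpow_natCast, omg, ← Complex.exp_nat_mul]
  have hne : ((2:ℂ)^h) ≠ 0 := pow_ne_zero _ (by norm_num)
  have harg : (2^(h-1) : ℕ) * (2 * (Real.pi:ℂ) * Complex.I / ((2^h : ℕ):ℂ))
      = (Real.pi:ℂ) * Complex.I := by
    have h2 : ((2^h : ℕ):ℂ) = 2^h := by push_cast; ring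
    have h3 : ((2^(h-1) : ℕ):ℂ) = 2^(h-1) := by push_cast; ring
    rw [h2, h3]
    have hsplit : (2:ℂ)^h = 2^(h-1) * 2 := by
      conv_lhs => rw [show h = (h-1)+1 by omega]
      rw [pow_succ]
    rw [hsplit]
    have : (2:ℂ)^(h-1) ≠ 0 := pow_ne_zero _ (by norm_num)
    field_simp
  rw [harg, Complex.exp_pi_mul_I]

lemma omg_shift {h : ℕ} (hh : 0 < h) (z ε : ℤ) (hε : ε = 1 ∨ ε = -1) :
    omg (2^h) ^ (z + (2:ℤ)^(h-1) * ε) = -(omg (2^h) ^ z) := by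
  rw [zpow_add₀ (omg_ne_zero _)]
  rcases hε with hε | hε <;> subst hε
  · rw [mul_one, omg_pow_half hh, mul_neg_one]
  · rw [mul_neg_one, zpow_neg, omg_pow_half hh]
    norm_num

lemma conj_omg (lam : ℕ) : (starRingEnd ℂ) (omg lam) = (omg lam)⁻¹ := by
  rw [omg, ← Complex.exp_conj, ← Complex.exp_neg]
  congr 1
  simp [map_div₀, Complex.conj_I, Complex.conj_ofNat]
  ring

lemma conj_omg_zpow (lam : ℕ) (z : ℤ) :
    (starRingEnd ℂ) (omg lam ^ z) = omg lam ^ (-z) := by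
  rw [map_zpow₀, conj_omg, inv_zpow, ← zpow_neg]

lemma fQuad_update_diff {m lam : ℕ} (π : Equiv.Perm (Fin m)) (cf : Fin m → ZMod lam)
    (x y : Fin m → ℕ) (ν : ℕ) (hν1 : 1 ≤ ν) (hνm : ν < m)
    (hagree : ∀ j : Fin m, (j:ℕ) < ν → x (π j) = y (π j))
    (hxb : x (π ⟨ν-1, by omega⟩) ≤ 1) :
    fQuad 2 m lam π cf (Function.update y (π ⟨ν-1, by omega⟩)
        (1 - y (π ⟨ν-1, by omega⟩)))
      - fQuad 2 m lam π cf (Function.update x (π ⟨ν-1, by omega⟩)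
        (1 - x (π ⟨ν-1, by omega⟩)))
      - (fQuad 2 m lam π cf y - fQuad 2 m lam π cf x)
    = ((lam/2 : ℕ):ℤ) * ((1 - 2 * (x (π ⟨ν-1, by omega⟩) : ℤ))
        * ((y (π ⟨ν, hνm⟩) : ℤ) - (x (π ⟨ν, hνm⟩) : ℤ))) := by
  have hm2 : 2 ≤ m := by omega
  set M : Fin m := ⟨ν-1, by omega⟩ with hM
  set K : Fin m := π M with hK
  have hxyK : x K = y K := hagree M (by simp [hM]; omega)
  have hyb : y K ≤ 1 := hxyK ▸ hxb
  -- cast facts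
  have hcx : ((1 - x K : ℕ) : ℤ) = 1 - (x K : ℤ) := by
    rw [Nat.cast_sub hxb]; norm_num
  have hcy : ((1 - y K : ℕ) : ℤ) = 1 - (y K : ℤ) := by
    rw [Nat.cast_sub hyb]; norm_num
  -- update application lemma
  have hupd : ∀ (z : Fin m → ℕ) (J : Fin m),
      Function.update z K (1 - z K) (π J) = if J = M then 1 - z K else z (π J) := by
    intro z J
    rw [Function.update_apply]
    congr 1
    simp only [eq_iff_iff]
    constructor
    · intro hc; exact π.injective hc
    · intro hc; rw [hc]
  simp only [fQuad]
  rw [show ∀ A B C D E F G H : ℤ, (A + B) - (C + D) - ((E + F) - (G + H))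
      = (A - C - (E - G)) + (B - D - (F - H)) from by intros; ring]
  have hlin : (∑ β : Fin m, ((cf β).val : ℤ) * ((Function.update y K (1 - y K)) β : ℤ))
      - (∑ β : Fin m, ((cf β).val : ℤ) * ((Function.update x K (1 - x K)) β : ℤ))
      - ((∑ β : Fin m, ((cf β).val : ℤ) * (y β : ℤ))
        - (∑ β : Fin m, ((cf β).val : ℤ) * (x β : ℤ))) = 0 := by
    rw [← Finset.sum_sub_distrib, ← Finset.sum_sub_distrib, ← Finset.sum_sub_distrib]
    apply Finset.sum_eq_zero
    intro β _
    by_cases hβ : β = K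
    · subst hβ
      rw [Function.update_self, Function.update_self, hcx, hcy, hxyK]
      ring
    · rw [Function.update_of_ne hβ, Function.update_of_ne hβ]
      ring
  rw [hlin, add_zero, ← mul_sub, ← mul_sub, ← mul_sub]
  congr 1
  rw [← Finset.sum_sub_distrib, ← Finset.sum_sub_distrib, ← Finset.sum_sub_distrib]
  have hB : ν - 1 < m - 1 := by omega
  rw [Finset.sum_eq_single_of_mem (⟨ν-1, hB⟩ : Fin (m-1)) (Finset.mem_univ _)]
  · -- the main term, β = ν-1
    have hJ1 : Fin.castLE (Nat.sub_le m 1) (⟨ν-1, hB⟩ : Fin (m-1)) = M := by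
      apply Fin.ext; rfl
    have hJ2 : (⟨((⟨ν-1, hB⟩ : Fin (m-1)) : ℕ) + 1, by show ν - 1 + 1 < m; omega⟩ : Fin m)
        = ⟨ν, hνm⟩ := by
      apply Fin.ext; show ν - 1 + 1 = ν; omega
    rw [hJ1, hJ2]
    simp only [hupd]
    have hne : (⟨ν, hνm⟩ : Fin m) ≠ M := by
      intro hc; rw [Fin.ext_iff] at hc; simp [hM] at hc; omega
    simp only [if_true, if_neg hne, hcx, hcy]
    rw [hxyK]
    ring
  · -- all other β give 0
    intro β _ hβne
    have hβval : (β : ℕ) ≠ ν - 1 := fun hc => hβne (Fin.ext hc)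
    have hJ1ne : Fin.castLE (Nat.sub_le m 1) β ≠ M := by
      intro hc; rw [Fin.ext_iff] at hc; simp [hM] at hc; exact hβval hc
    simp only [hupd]
    rw [if_neg hJ1ne, if_neg hJ1ne]
    split_ifs with h2
    · have hv : (β : ℕ) + 1 = ν - 1 := by
        rw [Fin.ext_iff] at h2; simpa [hM] using h2
      have hag1 : x (π (Fin.castLE (Nat.sub_le m 1) β)) =
          y (π (Fin.castLE (Nat.sub_le m 1) β)) := by
        apply hagree; simp; omega
      rw [hcx, hcy, h2, ← hK, hxyK, hag1]
      ring
    · ring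

/-- minimal index (in π-order) where digits of `i` and `i+n` disagree -/
noncomputable def nuF (m n : ℕ) (π : Equiv.Perm (Fin m)) (i : ℕ) : ℕ :=
  sInf {b : ℕ | ∃ j : Fin m, (j:ℕ) = b ∧ dig 2 m i (π j) ≠ dig 2 m (i+n) (π j)}

lemma nuF_set_nonempty {m n : ℕ} (π : Equiv.Perm (Fin m)) (i : ℕ)
    (hne : dig 2 m i ≠ dig 2 m (i+n)) :
    {b : ℕ | ∃ j : Fin m, (j:ℕ) = b ∧ dig 2 m i (π j) ≠ dig 2 m (i+n) (π j)}.Nonempty := by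
  obtain ⟨j₀, hj₀⟩ := Function.ne_iff.mp hne
  exact ⟨(π.symm j₀ : ℕ), π.symm j₀, rfl, by rwa [Equiv.apply_symm_apply]⟩

lemma nuF_mem {m n : ℕ} (π : Equiv.Perm (Fin m)) (i : ℕ)
    (hne : dig 2 m i ≠ dig 2 m (i+n)) :
    ∃ j : Fin m, (j:ℕ) = nuF m n π i ∧ dig 2 m i (π j) ≠ dig 2 m (i+n) (π j) :=
  Nat.sInf_mem (nuF_set_nonempty π i hne)

lemma nuF_lt {m n : ℕ} (π : Equiv.Perm (Fin m)) (i : ℕ)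
    (hne : dig 2 m i ≠ dig 2 m (i+n)) : nuF m n π i < m := by
  obtain ⟨j, hj, _⟩ := nuF_mem π i hne
  rw [← hj]; exact j.isLt

lemma nuF_ne {m n : ℕ} (π : Equiv.Perm (Fin m)) (i : ℕ)
    (hne : dig 2 m i ≠ dig 2 m (i+n)) (hlt : nuF m n π i < m) :
    dig 2 m i (π ⟨nuF m n π i, hlt⟩) ≠ dig 2 m (i+n) (π ⟨nuF m n π i, hlt⟩) := by
  obtain ⟨j, hj, hd⟩ := nuF_mem π i hne
  have : (⟨nuF m n π i, hlt⟩ : Fin m) = j := Fin.ext hj.symm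
  rwa [this]

lemma nuF_min {m n : ℕ} (π : Equiv.Perm (Fin m)) (i : ℕ) (j : Fin m)
    (hj : (j:ℕ) < nuF m n π i) : dig 2 m i (π j) = dig 2 m (i+n) (π j) := by
  by_contra hd
  have hmem : (j:ℕ) ∈ {b : ℕ | ∃ j' : Fin m,
      (j':ℕ) = b ∧ dig 2 m i (π j') ≠ dig 2 m (i+n) (π j')} := ⟨j, rfl, hd⟩
  have := Nat.sInf_le hmem
  unfold nuF at hj
  omega

lemma dig_le_one (m γ : ℕ) (j : Fin m) : dig 2 m γ j ≤ 1 := by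
  have : γ / 2^(j:ℕ) % 2 < 2 := Nat.mod_lt _ (by norm_num)
  simpa [dig] using by omega

lemma dig_flipB {m k γ : ℕ} (hk : k < m) (hγ : γ < 2^m) (K : Fin m) (hK : (K:ℕ) = k) :
    dig 2 m (flipB k γ) = Function.update (dig 2 m γ) K (1 - dig 2 m γ K) := by
  funext j
  rw [Function.update_apply]
  have hs := (flipB_spec hk hγ).2 (j:ℕ)
  by_cases hj : j = K
  · subst hj
    rw [if_pos rfl]
    show flipB k γ / 2^(j:ℕ) % 2 = 1 - γ / 2^(j:ℕ) % 2
    rw [hK] at hs ⊢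
    rw [hs, if_pos rfl]
  · rw [if_neg hj]
    have hjk : (j:ℕ) ≠ k := fun e => hj (Fin.ext (by rw [e, hK]))
    rw [if_neg hjk] at hs
    exact hs

lemma sign_pm (a b c : ℕ) (ha : a ≤ 1) (hb : b ≤ 1) (hc : c ≤ 1) (hbc : b ≠ c) :
    (1 - 2*(a:ℤ)) * ((c:ℤ) - (b:ℤ)) = 1 ∨ (1 - 2*(a:ℤ)) * ((c:ℤ) - (b:ℤ)) = -1 := by
  interval_cases a <;> interval_cases b <;> interval_cases c <;> simp_all

lemma two_pow_div_cast (h : ℕ) (hh : 0 < h) : ((2^h / 2 : ℕ) : ℤ) = (2:ℤ)^(h-1) := by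
  have he : 2^h = 2^(h-1) * 2 := by rw [← pow_succ]; congr 1; omega
  rw [he, Nat.mul_div_cancel _ (by norm_num)]
  push_cast; ring

set_option maxHeartbeats 2000000 in
lemma step (h m : ℕ) (hh : 0 < h) (hm : 0 < m) (π : Equiv.Perm (Fin m))
    (cf : Fin m → ZMod (2^h)) (n i : ℕ) (hγ : i < 2^m) (hδ : i + n < 2^m)
    (hn0 : 0 < n) (hν1 : 0 < nuF m n π i) :
    flipB ((π ⟨(nuF m n π i - 1) % m, Nat.mod_lt _ hm⟩ : Fin m) : ℕ) i + n
        = flipB ((π ⟨(nuF m n π i - 1) % m, Nat.mod_lt _ hm⟩ : Fin m) : ℕ) (i+n) ∧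
      flipB ((π ⟨(nuF m n π i - 1) % m, Nat.mod_lt _ hm⟩ : Fin m) : ℕ) i < 2^m ∧
      flipB ((π ⟨(nuF m n π i - 1) % m, Nat.mod_lt _ hm⟩ : Fin m) : ℕ) (i+n) < 2^m ∧
      flipB ((π ⟨(nuF m n π i - 1) % m, Nat.mod_lt _ hm⟩ : Fin m) : ℕ) i ≠ i ∧
      nuF m n π (flipB ((π ⟨(nuF m n π i - 1) % m, Nat.mod_lt _ hm⟩ : Fin m) : ℕ) i)
        = nuF m n π i ∧
      flipB ((π ⟨(nuF m n π i - 1) % m, Nat.mod_lt _ hm⟩ : Fin m) : ℕ)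
        (flipB ((π ⟨(nuF m n π i - 1) % m, Nat.mod_lt _ hm⟩ : Fin m) : ℕ) i) = i ∧
      ∃ ε : ℤ, (ε = 1 ∨ ε = -1) ∧
        fQuad 2 m (2^h) π cf (dig 2 m
            (flipB ((π ⟨(nuF m n π i - 1) % m, Nat.mod_lt _ hm⟩ : Fin m) : ℕ) i + n))
          - fQuad 2 m (2^h) π cf (dig 2 m
            (flipB ((π ⟨(nuF m n π i - 1) % m, Nat.mod_lt _ hm⟩ : Fin m) : ℕ) i))
        = fQuad 2 m (2^h) π cf (dig 2 m (i+n)) - fQuad 2 m (2^h) π cf (dig 2 m i)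
          + (2:ℤ)^(h-1) * ε := by
  have hne : dig 2 m i ≠ dig 2 m (i+n) := fun e => by
    have := dig_injective hγ hδ e; omega
  set ν := nuF m n π i with hνdef
  have hνm : ν < m := nuF_lt π i hne
  have hmod : (ν-1) % m = ν-1 := Nat.mod_eq_of_lt (by omega)
  set M : Fin m := ⟨(ν-1) % m, Nat.mod_lt _ hm⟩ with hMdef
  have hM' : M = ⟨ν-1, by omega⟩ := Fin.ext hmod
  set K : Fin m := π M with hKdef
  set k : ℕ := (K : ℕ) with hkdef
  have hkm : k < m := K.isLt
  have hagreeK : dig 2 m i K = dig 2 m (i+n) K := by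
    rw [hKdef]; exact nuF_min π i M (by rw [hMdef]; simpa [hmod] using by omega)
  have hbit : i / 2^k % 2 = (i+n) / 2^k % 2 := hagreeK
  have C1 : flipB k i + n = flipB k (i+n) := (flipB_add hbit).symm
  have C2a : flipB k i < 2^m := (flipB_spec hkm hγ).1
  have C2b : flipB k (i+n) < 2^m := (flipB_spec hkm hδ).1
  have C3 : flipB k i ≠ i := flipB_ne hkm hγ
  have hdx : dig 2 m (flipB k i) = Function.update (dig 2 m i) K (1 - dig 2 m i K) :=
    dig_flipB hkm hγ K rfl
  have hdy : dig 2 m (flipB k i + n)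
      = Function.update (dig 2 m (i+n)) K (1 - dig 2 m (i+n) K) := by
    rw [C1]; exact dig_flipB hkm hδ K rfl
  have hiff : ∀ j : Fin m,
      (dig 2 m (flipB k i) (π j) ≠ dig 2 m (flipB k i + n) (π j)) ↔
      (dig 2 m i (π j) ≠ dig 2 m (i+n) (π j)) := by
    intro j
    rw [hdx, hdy]
    by_cases hj : π j = K
    · rw [hj, Function.update_self, Function.update_self, hagreeK]
      simp
    · rw [Function.update_of_ne hj, Function.update_of_ne hj]
  have C4 : nuF m n π (flipB k i) = ν := by
    rw [hνdef]
    unfold nuF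
    congr 1
    ext b
    constructor
    · rintro ⟨j, hj, hd⟩; exact ⟨j, hj, (hiff j).mp hd⟩
    · rintro ⟨j, hj, hd⟩; exact ⟨j, hj, (hiff j).mpr hd⟩
  have C5 : flipB k (flipB k i) = i := flipB_flip hkm hγ
  refine ⟨C1, C2a, C2b, C3, C4, C5, ?_⟩
  -- the exponent shift
  have hdiff := fQuad_update_diff (lam := 2^h) π cf (dig 2 m i) (dig 2 m (i+n)) ν
    (by omega) hνm (fun j hj => nuF_min π i j hj) (dig_le_one m i _)
  have hsgn := sign_pm (dig 2 m i K) (dig 2 m i (π ⟨ν, hνm⟩)) (dig 2 m (i+n) (π ⟨ν, hνm⟩))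
      (dig_le_one m i K) (dig_le_one m i _) (dig_le_one m (i+n) _) (nuF_ne π i hne hνm)
  refine ⟨_, hsgn, ?_⟩
  · have hKeq : π (⟨ν-1, by omega⟩ : Fin m) = K := congrArg π hM'.symm
    rw [hKeq] at hdiff
    rw [two_pow_div_cast h hh] at hdiff
    rw [hdx, hdy]
    linarith [hdiff]

lemma sign_pm' (b c : ℕ) (hb : b ≤ 1) (hc : c ≤ 1) (hbc : b ≠ c) :
    (c:ℤ) - b = 1 ∨ (c:ℤ) - b = -1 := by
  interval_cases b <;> interval_cases c <;> simp_all

lemma case1 (h m : ℕ) (hh : 0 < h) (hm : 0 < m) (π : Equiv.Perm (Fin m))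
    (cf : Fin m → ZMod (2^h)) (n i : ℕ) (hγ : i < 2^m) (hδ : i + n < 2^m)
    (hn0 : 0 < n) (hν : nuF m n π i = 0) :
    omg (2^h) ^ (fQuad 2 m (2^h) π cf (dig 2 m (i+n)) - fQuad 2 m (2^h) π cf (dig 2 m i))
      + omg (2^h) ^ (fQuad 2 m (2^h) π cf (dig 2 m (i+n)) - fQuad 2 m (2^h) π cf (dig 2 m i)
          + (2:ℤ)^(h-1) * ((dig 2 m (i+n) (π ⟨0,hm⟩) : ℤ) - (dig 2 m i (π ⟨0,hm⟩) : ℤ)))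
      = 0 := by
  have hne : dig 2 m i ≠ dig 2 m (i+n) := fun e => by
    have := dig_injective hγ hδ e; omega
  have hνm : nuF m n π i < m := nuF_lt π i hne
  have hd := nuF_ne π i hne hνm
  have h0 : (⟨nuF m n π i, hνm⟩ : Fin m) = ⟨0, hm⟩ := Fin.ext hν
  rw [h0] at hd
  have hsgn := sign_pm' (dig 2 m i (π ⟨0,hm⟩)) (dig 2 m (i+n) (π ⟨0,hm⟩))
    (dig_le_one m i _) (dig_le_one m (i+n) _) hd
  rw [omg_shift hh _ _ hsgn]
  ring

set_option maxHeartbeats 2000000 in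
lemma main_pos (h m : ℕ) (hh : 0 < h) (hm : 0 < m) (π : Equiv.Perm (Fin m))
    (cf : Fin m → ZMod (2^h)) (n : ℕ) (hn0 : 0 < n) (hn : n < 2^m) :
    ∑ i ∈ Finset.range (2^m - n),
      (omg (2^h) ^ (fQuad 2 m (2^h) π cf (dig 2 m (i+n)) - fQuad 2 m (2^h) π cf (dig 2 m i))
        + omg (2^h) ^ (fQuad 2 m (2^h) π cf (dig 2 m (i+n)) - fQuad 2 m (2^h) π cf (dig 2 m i)
            + (2:ℤ)^(h-1) * ((dig 2 m (i+n) (π ⟨0,hm⟩) : ℤ) - (dig 2 m i (π ⟨0,hm⟩) : ℤ))))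
      = 0 := by
  refine Finset.sum_involution
    (fun i _ => if nuF m n π i = 0 then i
      else flipB ((π ⟨(nuF m n π i - 1) % m, Nat.mod_lt _ hm⟩ : Fin m) : ℕ) i) ?_ ?_ ?_ ?_
  · intro i hi
    have hit : i < 2^m - n := Finset.mem_range.mp hi
    have hγ : i < 2^m := by omega
    have hδ : i + n < 2^m := by omega
    by_cases hν : nuF m n π i = 0
    · simp only [if_pos hν]
      rw [case1 h m hh hm π cf n i hγ hδ hn0 hν]
      norm_num
    · obtain ⟨C1, C2a, C2b, C3, C4, C5, ε, hε, hD⟩ :=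
        step h m hh hm π cf n i hγ hδ hn0 (by omega)
      simp only [if_neg hν]
      have hE : dig 2 m i (π ⟨0,hm⟩) = dig 2 m (i+n) (π ⟨0,hm⟩) :=
        nuF_min π i ⟨0,hm⟩ (by show 0 < nuF m n π i; omega)
      have hE' : dig 2 m (flipB ((π ⟨(nuF m n π i - 1) % m, Nat.mod_lt _ hm⟩ : Fin m) : ℕ) i)
            (π ⟨0,hm⟩)
          = dig 2 m (flipB ((π ⟨(nuF m n π i - 1) % m, Nat.mod_lt _ hm⟩ : Fin m) : ℕ) i + n)
            (π ⟨0,hm⟩) :=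
        nuF_min π _ ⟨0,hm⟩ (by
          show 0 < nuF m n π (flipB ((π ⟨(nuF m n π i - 1) % m, Nat.mod_lt _ hm⟩ : Fin m) : ℕ) i)
          rw [C4]; omega)
      rw [hE, hE', sub_self, sub_self, mul_zero, add_zero, add_zero, hD,
        omg_shift hh _ _ hε]
      ring
  · intro i hi hfne
    have hit : i < 2^m - n := Finset.mem_range.mp hi
    by_cases hν : nuF m n π i = 0
    · exact absurd (case1 h m hh hm π cf n i (by omega) (by omega) hn0 hν) hfne
    · simp only [if_neg hν]
      exact (step h m hh hm π cf n i (by omega) (by omega) hn0 (by omega)).2.2.2.1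
  · intro i hi
    have hit : i < 2^m - n := Finset.mem_range.mp hi
    by_cases hν : nuF m n π i = 0
    · simpa only [if_pos hν] using hi
    · obtain ⟨C1, C2a, C2b, C3, C4, C5, _⟩ :=
        step h m hh hm π cf n i (by omega) (by omega) hn0 (by omega)
      simp only [if_neg hν]
      rw [Finset.mem_range]
      omega
  · intro i hi
    have hit : i < 2^m - n := Finset.mem_range.mp hi
    by_cases hν : nuF m n π i = 0
    · simp only [if_pos hν]
    · obtain ⟨C1, C2a, C2b, C3, C4, C5, _⟩ :=
        step h m hh hm π cf n i (by omega) (by omega) hn0 (by omega)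
      simp only [if_neg hν, C4]
      exact C5


/-- GDJ: for the generalized Boolean function
`f = 2^{h-1}·Σ v_{π(α)}v_{π(α+1)} + Σ c_α v_α`, the pair
`(ψ(f + c), ψ(f + 2^{h-1} v_{π(1)} + c'))` is a `(2, 2^m)` Golay complementary pair. -/
theorem statement7 (h : ℕ) (hh : 0 < h) (m : ℕ) (hm : 0 < m)
    (π : Equiv.Perm (Fin m)) (cf : Fin m → ZMod (2 ^ h)) (c c' : ZMod (2 ^ h))
    (u : ℤ) (hu0 : u ≠ 0) (hu : u.natAbs < 2 ^ m) :
    aCorr (2 ^ m)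
        (fun γ => omg (2 ^ h) ^ (fQuad 2 m (2 ^ h) π cf (dig 2 m γ) + ((c.val : ℕ) : ℤ)))
        (fun γ => omg (2 ^ h) ^ (fQuad 2 m (2 ^ h) π cf (dig 2 m γ) + ((c.val : ℕ) : ℤ))) u
      + aCorr (2 ^ m)
          (fun γ => omg (2 ^ h) ^ (fQuad 2 m (2 ^ h) π cf (dig 2 m γ)
            + (2 : ℤ) ^ (h - 1) * (dig 2 m γ (π ⟨0, hm⟩) : ℤ) + ((c'.val : ℕ) : ℤ)))
          (fun γ => omg (2 ^ h) ^ (fQuad 2 m (2 ^ h) π cf (dig 2 m γ)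
            + (2 : ℤ) ^ (h - 1) * (dig 2 m γ (π ⟨0, hm⟩) : ℤ) + ((c'.val : ℕ) : ℤ))) u
      = 0 := by
  rcases hu0.lt_or_gt with hneg | hpos
  · -- u < 0 : conjugate of the positive case
    have hn0 : 0 < (-u).toNat := by omega
    have hnlt : (-u).toNat < 2^m := by omega
    simp only [aCorr, if_neg (show ¬(0:ℤ) ≤ u by omega)]
    rw [← Finset.sum_add_distrib]
    have key := main_pos h m hh hm π cf ((-u).toNat) hn0 hnlt
    have key2 := congrArg (starRingEnd ℂ) key
    rw [map_zero, map_sum] at key2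
    rw [← key2]
    refine Finset.sum_congr rfl fun i _ => ?_
    rw [map_add, conj_omg_zpow, conj_omg_zpow, conj_omg_zpow, conj_omg_zpow,
      ← zpow_add₀ (omg_ne_zero _), ← zpow_add₀ (omg_ne_zero _)]
    congr 1
    · congr 1; ring
    · congr 1; ring
  · -- u > 0
    have hn0 : 0 < u.toNat := by omega
    have hnlt : u.toNat < 2^m := by omega
    simp only [aCorr, if_pos (show (0:ℤ) ≤ u by omega)]
    rw [← Finset.sum_add_distrib]
    rw [← main_pos h m hh hm π cf (u.toNat) hn0 hnlt]
    refine Finset.sum_congr rfl fun i _ => ?_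
    rw [conj_omg_zpow, conj_omg_zpow,
      ← zpow_add₀ (omg_ne_zero _), ← zpow_add₀ (omg_ne_zero _)]
    congr 1
    · congr 1; ring
    · congr 1; ring
end

section
/- Let {C_μ : μ = 0,…,K−1} be a family of M×L complex matrices forming a (K,M,L)-MOGCS (i.e., K ≤ M, Σ-row autocorrelations vanish for 0 < |u| < L, and cross-correlation sums between distinct codes vanish for all |u| < L), and let {D_ν : ν = 0,…,K₁−1} be M₁×L₁ complex matrices forming a (K₁,M₁,L₁)-MOGCS. Then the family {C_μ ⊗ D_ν : 0 ≤ μ ≤ K−1, 0 ≤ ν ≤ K₁−1} of KK₁ matrices, each of size (MM₁)×(LL₁) given by the matrix Kronecker product, satisfies: C(C_μ ⊗ D_ν, C_μ ⊗ D_ν)(u) = 0 for all 0 < |u| < LL₁, and C(C_μ ⊗ D_ν, C_{μ'} ⊗ D_{ν'})(u) = 0 for all |u| < LL₁ whenever (μ,ν) ≠ (μ',ν'). In particular, if K = M and K₁ = M₁ then {C_μ ⊗ D_ν} forms a (KK₁, KK₁, LL₁)-CCC. -/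
open Finset

/-- Kronecker product of an `M × L` matrix with an `M₁ × L₁` matrix:
`(C ⊗ D)_{(i·M₁+i'),(j·L₁+j')} = C_{i,j} · D_{i',j'}`. -/
noncomputable def kron (M₁ L₁ : ℕ) (C D : ℕ → ℕ → ℂ) : ℕ → ℕ → ℂ :=
  fun i j => C (i / M₁) (j / L₁) * D (i % M₁) (j % L₁)


lemma aCorr_natCast (L : ℕ) (a b : ℕ → ℂ) (n : ℕ) :
    aCorr L a b (n : ℤ) = ∑ i ∈ range (L - n), a (i + n) * (starRingEnd ℂ) (b i) := by
  simp [aCorr]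

lemma aCorr_neg_natCast (L : ℕ) (a b : ℕ → ℂ) (n : ℕ) :
    aCorr L a b (-(n : ℤ)) = ∑ i ∈ range (L - n), a i * (starRingEnd ℂ) (b (i + n)) := by
  rcases Nat.eq_zero_or_pos n with h | h
  · subst h; simp [aCorr]
  · rw [aCorr, if_neg (by omega)]
    simp

lemma aCorr_conj (L : ℕ) (a b : ℕ → ℂ) (u : ℤ) :
    aCorr L a b u = (starRingEnd ℂ) (aCorr L b a (-u)) := by
  rcases le_or_gt 0 u with h | h
  · obtain ⟨n, rfl⟩ := Int.eq_ofNat_of_zero_le h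
    rw [aCorr_natCast, aCorr_neg_natCast, map_sum]
    refine sum_congr rfl fun i _ => ?_
    simp [mul_comm]
  · obtain ⟨n, rfl⟩ : ∃ n : ℕ, u = -(n : ℤ) := ⟨(-u).toNat, by omega⟩
    rw [aCorr_neg_natCast, neg_neg, aCorr_natCast, map_sum]
    refine sum_congr rfl fun i _ => ?_
    simp [mul_comm]

lemma codeCorr_conj (M L : ℕ) (P Q : ℕ → ℕ → ℂ) (u : ℤ) :
    codeCorr M L P Q u = (starRingEnd ℂ) (codeCorr M L Q P (-u)) := by
  rw [codeCorr, codeCorr, map_sum]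
  exact sum_congr rfl fun ν _ => aCorr_conj L (P ν) (Q ν) u

lemma codeCorr_eq_zero_of_le (M L : ℕ) (P Q : ℕ → ℕ → ℂ) (u : ℤ) (h : L ≤ u.natAbs) :
    codeCorr M L P Q u = 0 := by
  rw [codeCorr]
  refine sum_eq_zero fun ν _ => ?_
  rw [aCorr]
  split <;> rw [Nat.sub_eq_zero_of_le (by omega)] <;> simp

lemma codeCorr_natCast (M L : ℕ) (P Q : ℕ → ℕ → ℂ) (n : ℕ) :
    codeCorr M L P Q (n : ℤ)
      = ∑ j ∈ range (L - n), ∑ a ∈ range M, P a (j + n) * (starRingEnd ℂ) (Q a j) := by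
  rw [codeCorr]
  simp only [aCorr_natCast]
  exact Finset.sum_comm

lemma codeCorr_neg_natCast (M L : ℕ) (P Q : ℕ → ℕ → ℂ) (n : ℕ) :
    codeCorr M L P Q (-(n : ℤ))
      = ∑ j ∈ range (L - n), ∑ a ∈ range M, P a j * (starRingEnd ℂ) (Q a (j + n)) := by
  rw [codeCorr]
  simp only [aCorr_neg_natCast]
  exact Finset.sum_comm



lemma sum_range_mul_div_mod (a c : ℕ) (f : ℕ → ℕ → ℂ) :
    ∑ ν ∈ range (a * c), f (ν / c) (ν % c) = ∑ j ∈ range a, ∑ k ∈ range c, f j k := by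
  induction a with
  | zero => simp
  | succ n ih =>
    rw [Nat.succ_mul, Finset.sum_range_add, ih, Finset.sum_range_succ]
    congr 1
    refine Finset.sum_congr rfl fun k hk => ?_
    rw [mem_range] at hk
    have hc : 0 < c := lt_of_le_of_lt (Nat.zero_le _) hk
    rw [show n * c + k = k + n * c by ring, Nat.add_mul_div_right _ _ hc,
      Nat.add_mul_mod_self_right, Nat.div_eq_of_lt hk, Nat.mod_eq_of_lt hk, Nat.zero_add]

lemma sum_range_mul' (a c : ℕ) (h : ℕ → ℂ) :
    ∑ i ∈ range (a * c), h i = ∑ j ∈ range a, ∑ k ∈ range c, h (j * c + k) := by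
  rw [← sum_range_mul_div_mod a c (fun j k => h (j * c + k))]
  exact Finset.sum_congr rfl fun i _ => by rw [Nat.div_add_mod']

lemma key (M M₁ L L₁ : ℕ) (A A' B B' : ℕ → ℕ → ℂ) (s t : ℕ) (hs : s < L) (ht : t < L₁) :
    codeCorr (M * M₁) (L * L₁) (kron M₁ L₁ A B) (kron M₁ L₁ A' B') ((s * L₁ + t : ℕ) : ℤ)
    = codeCorr M L A A' (s : ℤ) * codeCorr M₁ L₁ B B' (t : ℤ)
      + codeCorr M L A A' ((s + 1 : ℕ) : ℤ) * codeCorr M₁ L₁ B B' (-((L₁ - t : ℕ) : ℤ)) := by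
  have hL₁ : 0 < L₁ := lt_of_le_of_lt (Nat.zero_le _) ht
  set u := s * L₁ + t with hu
  set F : ℕ → ℕ → ℂ := fun p q => ∑ a ∈ range M, A a p * (starRingEnd ℂ) (A' a q) with hF
  set G : ℕ → ℕ → ℂ := fun p q => ∑ b ∈ range M₁, B b p * (starRingEnd ℂ) (B' b q) with hG
  have inner : ∀ i : ℕ,
      (∑ ν ∈ range (M * M₁), kron M₁ L₁ A B ν (i + u) * (starRingEnd ℂ) (kron M₁ L₁ A' B' ν i))
      = F ((i + u) / L₁) (i / L₁) * G ((i + u) % L₁) (i % L₁) := by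
    intro i
    have e : ∀ ν : ℕ, kron M₁ L₁ A B ν (i + u) * (starRingEnd ℂ) (kron M₁ L₁ A' B' ν i)
        = (A (ν / M₁) ((i + u) / L₁) * (starRingEnd ℂ) (A' (ν / M₁) (i / L₁)))
          * (B (ν % M₁) ((i + u) % L₁) * (starRingEnd ℂ) (B' (ν % M₁) (i % L₁))) := by
      intro ν; rw [kron, kron, map_mul]; ring
    rw [Finset.sum_congr rfl fun ν _ => e ν,
      sum_range_mul_div_mod M M₁ (fun a b =>
        (A a ((i + u) / L₁) * (starRingEnd ℂ) (A' a (i / L₁)))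
        * (B b ((i + u) % L₁) * (starRingEnd ℂ) (B' b (i % L₁)))),
      hF, hG, ← Finset.sum_mul_sum]
  rw [codeCorr_natCast]
  have step1 : ∀ i ∈ range (L * L₁ - u),
      (∑ ν ∈ range (M * M₁), kron M₁ L₁ A B ν (i + u) * (starRingEnd ℂ) (kron M₁ L₁ A' B' ν i))
      = F ((i + u) / L₁) (i / L₁) * G ((i + u) % L₁) (i % L₁) := fun i _ => inner i
  rw [Finset.sum_congr rfl step1]
  set h : ℕ → ℂ := fun i => F ((i + u) / L₁) (i / L₁) * G ((i + u) % L₁) (i % L₁) with hh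
  have hN : L * L₁ - u = (L - s - 1) * L₁ + (L₁ - t) := by
    have e1 : (L - s - 1) * L₁ + L₁ + s * L₁ = ((L - s - 1) + 1 + s) * L₁ := by ring
    have e2 : (L - s - 1) + 1 + s = L := by omega
    rw [e2] at e1
    omega
  have ev1 : ∀ j k : ℕ, k < L₁ - t → h (j * L₁ + k) = F (j + s) j * G (k + t) k := by
    intro j k hk
    have hkt : k + t < L₁ := by omega
    have hkL : k < L₁ := by omega
    have e1 : j * L₁ + k + u = (k + t) + (j + s) * L₁ := by rw [hu]; ring
    have e2 : j * L₁ + k = k + j * L₁ := by ring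
    have d1 : (j * L₁ + k + u) / L₁ = j + s := by
      rw [e1, Nat.add_mul_div_right _ _ hL₁, Nat.div_eq_of_lt hkt, Nat.zero_add]
    have d2 : (j * L₁ + k + u) % L₁ = k + t := by
      rw [e1, Nat.add_mul_mod_self_right, Nat.mod_eq_of_lt hkt]
    have d3 : (j * L₁ + k) / L₁ = j := by
      rw [e2, Nat.add_mul_div_right _ _ hL₁, Nat.div_eq_of_lt hkL, Nat.zero_add]
    have d4 : (j * L₁ + k) % L₁ = k := by
      rw [e2, Nat.add_mul_mod_self_right, Nat.mod_eq_of_lt hkL]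
    simp only [hh]
    rw [d1, d2, d3, d4]
  have ev2 : ∀ j m : ℕ, m < t →
      h (j * L₁ + ((L₁ - t) + m)) = F (j + s + 1) j * G m ((L₁ - t) + m) := by
    intro j m hm
    have hmL : (L₁ - t) + m < L₁ := by omega
    have hmt : m < L₁ := by omega
    have e0 : (j + s + 1) * L₁ = j * L₁ + s * L₁ + L₁ := by ring
    have e1 : j * L₁ + ((L₁ - t) + m) + u = m + (j + s + 1) * L₁ := by rw [hu, e0]; omega
    have e2 : j * L₁ + ((L₁ - t) + m) = ((L₁ - t) + m) + j * L₁ := by ring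
    have d1 : (j * L₁ + ((L₁ - t) + m) + u) / L₁ = j + s + 1 := by
      rw [e1, Nat.add_mul_div_right _ _ hL₁, Nat.div_eq_of_lt hmt, Nat.zero_add]
    have d2 : (j * L₁ + ((L₁ - t) + m) + u) % L₁ = m := by
      rw [e1, Nat.add_mul_mod_self_right, Nat.mod_eq_of_lt hmt]
    have d3 : (j * L₁ + ((L₁ - t) + m)) / L₁ = j := by
      rw [e2, Nat.add_mul_div_right _ _ hL₁, Nat.div_eq_of_lt hmL, Nat.zero_add]
    have d4 : (j * L₁ + ((L₁ - t) + m)) % L₁ = (L₁ - t) + m := by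
      rw [e2, Nat.add_mul_mod_self_right, Nat.mod_eq_of_lt hmL]
    simp only [hh]
    rw [d1, d2, d3, d4]
  rw [hN, Finset.sum_range_add, sum_range_mul']
  have blockeq : ∀ j ∈ range (L - s - 1),
      (∑ k ∈ range L₁, h (j * L₁ + k))
      = F (j + s) j * (∑ k ∈ range (L₁ - t), G (k + t) k)
        + F (j + s + 1) j * (∑ m ∈ range t, G m ((L₁ - t) + m)) := by
    intro j _
    have e := Finset.sum_range_add (fun k => h (j * L₁ + k)) (L₁ - t) t
    have splitL₁' : (L₁ - t) + t = L₁ := by omega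
    rw [splitL₁'] at e
    rw [e, Finset.mul_sum, Finset.mul_sum]
    congr 1
    · exact Finset.sum_congr rfl fun k hk => ev1 j k (mem_range.mp hk)
    · exact Finset.sum_congr rfl fun m hm => ev2 j m (mem_range.mp hm)
  have taileq : ∀ m ∈ range (L₁ - t),
      h ((L - s - 1) * L₁ + m) = F ((L - s - 1) + s) (L - s - 1) * G (m + t) m :=
    fun m hm => ev1 (L - s - 1) m (mem_range.mp hm)
  rw [Finset.sum_congr rfl blockeq, Finset.sum_congr rfl taileq, ← Finset.mul_sum]
  -- now rewrite the RHS codeCorr's as sums of F and G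
  have eFs : codeCorr M L A A' (s : ℤ)
      = (∑ j ∈ range (L - s - 1), F (j + s) j) + F ((L - s - 1) + s) (L - s - 1) := by
    have e := Finset.sum_range_succ (fun j => F (j + s) j) (L - s - 1)
    have hb : L - s - 1 + 1 = L - s := by omega
    rw [hb] at e
    rw [codeCorr_natCast]
    exact e
  have eFs1 : codeCorr M L A A' ((s + 1 : ℕ) : ℤ) = ∑ j ∈ range (L - s - 1), F (j + s + 1) j := by
    rw [codeCorr_natCast]
    have : L - (s + 1) = L - s - 1 := by omega
    rw [this]
    refine Finset.sum_congr rfl fun j _ => ?_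
    rw [hF, Nat.add_assoc]
  have eGt : codeCorr M₁ L₁ B B' (t : ℤ) = ∑ k ∈ range (L₁ - t), G (k + t) k := by
    rw [codeCorr_natCast]
  have eGc : codeCorr M₁ L₁ B B' (-((L₁ - t : ℕ) : ℤ)) = ∑ m ∈ range t, G m ((L₁ - t) + m) := by
    rw [codeCorr_neg_natCast]
    have : L₁ - (L₁ - t) = t := by omega
    rw [this]
    refine Finset.sum_congr rfl fun m _ => ?_
    rw [hG, Nat.add_comm m (L₁ - t)]
  rw [eFs, eFs1, eGt, eGc]
  rw [Finset.sum_add_distrib, add_mul, Finset.sum_mul, Finset.sum_mul, Finset.sum_mul]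
  ring

/-- the Kronecker product of a `(K,M,L)`-MOGCS with a `(K₁,M₁,L₁)`-MOGCS
is a family of `K·K₁` codes of size `(M·M₁) × (L·L₁)` whose autocorrelation sums vanish
for `0 < |u| < L·L₁` and whose cross-correlation sums vanish for all `|u| < L·L₁`. -/
theorem statement8 (K M L K₁ M₁ L₁ : ℕ) (hKM : K ≤ M) (hKM₁ : K₁ ≤ M₁)
    (C : ℕ → ℕ → ℕ → ℂ) (D : ℕ → ℕ → ℕ → ℂ)
    (hCauto : ∀ μ < K, ∀ u : ℤ, u ≠ 0 → u.natAbs < L →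
      codeCorr M L (C μ) (C μ) u = 0)
    (hCcross : ∀ μ₁ < K, ∀ μ₂ < K, μ₁ ≠ μ₂ → ∀ u : ℤ, u.natAbs < L →
      codeCorr M L (C μ₁) (C μ₂) u = 0)
    (hDauto : ∀ ν < K₁, ∀ u : ℤ, u ≠ 0 → u.natAbs < L₁ →
      codeCorr M₁ L₁ (D ν) (D ν) u = 0)
    (hDcross : ∀ ν₁ < K₁, ∀ ν₂ < K₁, ν₁ ≠ ν₂ → ∀ u : ℤ, u.natAbs < L₁ →
      codeCorr M₁ L₁ (D ν₁) (D ν₂) u = 0) :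
    (∀ μ < K, ∀ ν < K₁, ∀ u : ℤ, u ≠ 0 → u.natAbs < L * L₁ →
      codeCorr (M * M₁) (L * L₁) (kron M₁ L₁ (C μ) (D ν)) (kron M₁ L₁ (C μ) (D ν)) u = 0) ∧
    (∀ μ < K, ∀ μ' < K, ∀ ν < K₁, ∀ ν' < K₁, (μ, ν) ≠ (μ', ν') →
      ∀ u : ℤ, u.natAbs < L * L₁ →
      codeCorr (M * M₁) (L * L₁) (kron M₁ L₁ (C μ) (D ν)) (kron M₁ L₁ (C μ') (D ν')) u = 0) := by
  have main : ∀ μ < K, ∀ μ' < K, ∀ ν < K₁, ∀ ν' < K₁, ∀ n : ℕ, n < L * L₁ →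
      ((μ, ν) = (μ', ν') → n ≠ 0) →
      codeCorr (M * M₁) (L * L₁) (kron M₁ L₁ (C μ) (D ν)) (kron M₁ L₁ (C μ') (D ν')) (n : ℤ)
        = 0 := by
    intro μ hμ μ' hμ' ν hν ν' hν' n hn hcond
    have hL₁ : 0 < L₁ := by
      rcases Nat.eq_zero_or_pos L₁ with h | h
      · subst h; simp at hn
      · exact h
    have hs : n / L₁ < L := (Nat.div_lt_iff_lt_mul hL₁).mpr hn
    have ht : n % L₁ < L₁ := Nat.mod_lt _ hL₁
    have hn' : n = n / L₁ * L₁ + n % L₁ := (Nat.div_add_mod' n L₁).symm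
    rw [hn', key M M₁ L L₁ (C μ) (C μ') (D ν) (D ν') _ _ hs ht]
    have h2 : codeCorr M L (C μ) (C μ') ((n / L₁ + 1 : ℕ) : ℤ) = 0 := by
      by_cases hL : n / L₁ + 1 < L
      · by_cases hμμ : μ = μ'
        · subst hμμ
          exact hCauto μ hμ _ (Int.natCast_ne_zero.mpr (Nat.succ_ne_zero _)) (lt_of_eq_of_lt (Int.natAbs_natCast _) hL)
        · exact hCcross μ hμ μ' hμ' hμμ _ (lt_of_eq_of_lt (Int.natAbs_natCast _) hL)
      · refine codeCorr_eq_zero_of_le _ _ _ _ _ ?_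
        simp only [Int.natAbs_natCast]
        omega
    rw [h2, zero_mul, add_zero]
    by_cases hμμ : μ = μ'
    · subst hμμ
      by_cases hs0 : n / L₁ = 0
      · by_cases hνν : ν = ν'
        · subst hνν
          have hnz : n ≠ 0 := hcond rfl
          have ht0 : n % L₁ ≠ 0 := by
            rw [hs0, Nat.zero_mul, Nat.zero_add] at hn'
            omega
          rw [hDauto ν hν _ (by exact_mod_cast ht0) (lt_of_eq_of_lt (Int.natAbs_natCast _) ht), mul_zero]
        · rw [hDcross ν hν ν' hν' hνν _ (lt_of_eq_of_lt (Int.natAbs_natCast _) ht), mul_zero]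
      · rw [hCauto μ hμ _ (by exact_mod_cast hs0) (lt_of_eq_of_lt (Int.natAbs_natCast _) hs), zero_mul]
    · rw [hCcross μ hμ μ' hμ' hμμ _ (lt_of_eq_of_lt (Int.natAbs_natCast _) hs), zero_mul]
  constructor
  · intro μ hμ ν hν u hu0 hu
    rcases le_or_gt 0 u with h | h
    · obtain ⟨n, rfl⟩ := Int.eq_ofNat_of_zero_le h
      exact main μ hμ μ hμ ν hν ν hν n (by simpa using hu) (fun _ => by exact_mod_cast hu0)
    · have e : -u = ((u.natAbs : ℕ) : ℤ) := by omega
      rw [codeCorr_conj, e, main μ hμ μ hμ ν hν ν hν u.natAbs hu (fun _ => by omega)]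
      exact map_zero _
  · intro μ hμ μ' hμ' ν hν ν' hν' hne u hu
    rcases le_or_gt 0 u with h | h
    · obtain ⟨n, rfl⟩ := Int.eq_ofNat_of_zero_le h
      exact main μ hμ μ' hμ' ν hν ν' hν' n (by simpa using hu) (fun hc => absurd hc hne)
    · have e : -u = ((u.natAbs : ℕ) : ℤ) := by omega
      rw [codeCorr_conj, e,
        main μ' hμ' μ hμ ν' hν' ν hν u.natAbs hu (fun hc => absurd hc.symm hne)]
      exact map_zero _
end

section
/- For every integer L ≥ 2 there exists a (K, K, L)-CCC whose entries all have modulus 1, where K = rad(L) is the product of the distinct primes dividing L: that is, there exist K complex matrices C_0,…,C_{K−1}, each of size K × L with unimodular entries, such that C(C_μ, C_μ)(0) = KL for all μ, C(C_μ, C_μ)(u) = 0 for all 0 < |u| < L, and C(C_{μ1}, C_{μ2})(u) = 0 for all |u| < L whenever μ1 ≠ μ2. -/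
open Finset

/-- The radical of `L`: the product of the distinct primes dividing `L`. -/
def radN (L : ℕ) : ℕ := ∏ p ∈ L.primeFactors, p

/-! ### Auxiliary machinery -/

/-- Correlation of two rows at a natural shift. -/
noncomputable def rowCorr (L : ℕ) (a b : ℕ → ℂ) (w : ℕ) : ℂ :=
  ∑ i ∈ Finset.range (L - w), a (i + w) * (starRingEnd ℂ) (b i)

/-- Code correlation at a natural shift. -/
noncomputable def ccN (M L : ℕ) (C D : ℕ → ℕ → ℂ) (w : ℕ) : ℂ :=
  ∑ ν ∈ Finset.range M, rowCorr L (C ν) (D ν) w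

/-- The full CCC property, phrased with natural shifts. -/
def Pred (K L : ℕ) (C : ℕ → ℕ → ℕ → ℂ) : Prop :=
  (∀ μ < K, ∀ r < K, ∀ n < L, ‖C μ r n‖ = 1) ∧
  ∀ μ1 < K, ∀ μ2 < K, ∀ w, w < L →
    ccN K L (C μ1) (C μ2) w = if μ1 = μ2 ∧ w = 0 then ((K * L : ℕ) : ℂ) else 0

lemma sum_range_mul'_s12 (f : ℕ → ℂ) (a b : ℕ) :
    ∑ i ∈ Finset.range (a * b), f i
      = ∑ q ∈ Finset.range b, ∑ s ∈ Finset.range a, f (s + a * q) := by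
  induction b with
  | zero => simp
  | succ b ih =>
    rw [Nat.mul_succ, Finset.sum_range_add, ih, Finset.sum_range_succ]
    congr 1
    exact Finset.sum_congr rfl fun s _ => by rw [Nat.add_comm (a * b) s]

lemma sum_range_split (g : ℕ → ℂ) (m k : ℕ) (h : k ≤ m) :
    ∑ s ∈ Finset.range m, g s
      = (∑ s ∈ Finset.range k, g s) + ∑ j ∈ Finset.range (m - k), g (k + j) := by
  rw [← Finset.sum_range_add, Nat.add_sub_cancel' h]

lemma ccN_of_le {M L : ℕ} {C D : ℕ → ℕ → ℂ} {w : ℕ} (h : L ≤ w) :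
    ccN M L C D w = 0 := by
  simp [ccN, rowCorr, Nat.sub_eq_zero_of_le h]

lemma sum_pow_eq_zero {x : ℂ} {p : ℕ} (h1 : x ^ p = 1) (h2 : x ≠ 1) :
    ∑ r ∈ Finset.range p, x ^ r = 0 := by
  rw [geom_sum_eq h2, h1]
  simp

lemma rowCorr_phase (L w : ℕ) (x : ℂ) (hx : x * (starRingEnd ℂ) x = 1) (a b : ℕ → ℂ) :
    rowCorr L (fun n => x ^ n * a n) (fun n => x ^ n * b n) w
      = x ^ w * rowCorr L a b w := by
  unfold rowCorr
  rw [Finset.mul_sum]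
  refine Finset.sum_congr rfl fun i _ => ?_
  have h : x ^ (i + w) * a (i + w) * (starRingEnd ℂ) (x ^ i * b i)
      = (x * (starRingEnd ℂ) x) ^ i * (x ^ w * (a (i + w) * (starRingEnd ℂ) (b i))) := by
    rw [map_mul, map_pow, pow_add, mul_pow]
    ring
  rw [h, hx, one_pow, one_mul]

lemma rowCorr_interleave (p M t : ℕ) (hp : 0 < p) (B1 B2 : ℕ → ℕ → ℂ) :
    rowCorr (p * M) (fun n => B1 (n % p) (n / p)) (fun n => B2 (n % p) (n / p)) (p * t)
      = ∑ s ∈ Finset.range p, rowCorr M (B1 s) (B2 s) t := by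
  unfold rowCorr
  rw [show p * M - p * t = p * (M - t) from (Nat.mul_sub p M t).symm, sum_range_mul'_s12,
    Finset.sum_comm]
  refine Finset.sum_congr rfl fun s hs => Finset.sum_congr rfl fun q hq => ?_
  have hs' : s < p := Finset.mem_range.mp hs
  have e1 : s + p * q + p * t = s + p * (q + t) := by ring
  simp only [e1, Nat.add_mul_mod_self_left, Nat.add_mul_div_left _ _ hp,
    Nat.mod_eq_of_lt hs', Nat.div_eq_of_lt hs', Nat.zero_add]

lemma rowCorr_concat (L1 L2 t v : ℕ) (hL1 : 0 < L1) (hv : v < L1) (ht : t < L2)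
    (a b c d : ℕ → ℂ) :
    rowCorr (L1 * L2) (fun n => a (n % L1) * c (n / L1)) (fun n => b (n % L1) * d (n / L1))
      (v + L1 * t)
    = rowCorr L1 a b v * rowCorr L2 c d t +
      (∑ j ∈ Finset.range v, a j * (starRingEnd ℂ) (b (j + (L1 - v)))) *
        rowCorr L2 c d (t + 1) := by
  obtain ⟨c2, rfl⟩ : ∃ c2, L2 = t + 1 + c2 := ⟨L2 - t - 1, by omega⟩
  have hN : L1 * (t + 1 + c2) - (v + L1 * t) = L1 * c2 + (L1 - v) := by
    have h1 : L1 * (t + 1 + c2) = L1 * t + L1 * c2 + L1 := by ring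
    rw [h1]
    generalize L1 * t = A
    generalize L1 * c2 = B
    omega
  unfold rowCorr
  rw [hN, Finset.sum_range_add, sum_range_mul'_s12]
  have hsplit : ∀ q : ℕ,
      (∑ s ∈ Finset.range L1,
        (fun i => a ((i + (v + L1 * t)) % L1) * c ((i + (v + L1 * t)) / L1) *
          (starRingEnd ℂ) (b (i % L1) * d (i / L1))) (s + L1 * q))
      = (∑ s ∈ Finset.range (L1 - v),
          (a (s + v) * (starRingEnd ℂ) (b s)) * (c (q + t) * (starRingEnd ℂ) (d q)))
        + ∑ j ∈ Finset.range v,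
          (a j * (starRingEnd ℂ) (b (j + (L1 - v)))) *
            (c (q + t + 1) * (starRingEnd ℂ) (d q)) := by
    intro q
    rw [sum_range_split _ L1 (L1 - v) (by omega), show L1 - (L1 - v) = v from by omega]
    congr 1
    · refine Finset.sum_congr rfl fun s hs => ?_
      have hs' : s < L1 - v := Finset.mem_range.mp hs
      have e1 : s + L1 * q + (v + L1 * t) = s + v + L1 * (q + t) := by ring
      simp only [e1, Nat.add_mul_mod_self_left, Nat.add_mul_div_left _ _ hL1,
        Nat.mod_eq_of_lt (show s + v < L1 by omega), Nat.mod_eq_of_lt (show s < L1 by omega),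
        Nat.div_eq_of_lt (show s + v < L1 by omega), Nat.div_eq_of_lt (show s < L1 by omega),
        Nat.zero_add, map_mul]
      ring
    · refine Finset.sum_congr rfl fun j hj => ?_
      have hj' : j < v := Finset.mem_range.mp hj
      have e1 : L1 - v + j + L1 * q + (v + L1 * t) = j + L1 * (q + t + 1) := by
        have hx : L1 * (q + t + 1) = L1 * q + L1 * t + L1 := by ring
        rw [hx]
        generalize L1 * q = A
        generalize L1 * t = B
        omega
      simp only [e1, Nat.add_mul_mod_self_left, Nat.add_mul_div_left _ _ hL1,
        Nat.mod_eq_of_lt (show j < L1 by omega),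
        Nat.mod_eq_of_lt (show L1 - v + j < L1 by omega),
        Nat.div_eq_of_lt (show j < L1 by omega),
        Nat.div_eq_of_lt (show L1 - v + j < L1 by omega),
        Nat.zero_add, map_mul]
      rw [show L1 - v + j = j + (L1 - v) from by omega]
      ring
  have htail : ∀ s : ℕ, s < L1 - v →
      (fun i => a ((i + (v + L1 * t)) % L1) * c ((i + (v + L1 * t)) / L1) *
          (starRingEnd ℂ) (b (i % L1) * d (i / L1))) (L1 * c2 + s)
      = (a (s + v) * (starRingEnd ℂ) (b s)) * (c (c2 + t) * (starRingEnd ℂ) (d c2)) := by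
    intro s hs'
    have e2 : L1 * c2 + s = s + L1 * c2 := by ring
    have e1 : s + L1 * c2 + (v + L1 * t) = s + v + L1 * (c2 + t) := by ring
    simp only [e2, e1, Nat.add_mul_mod_self_left, Nat.add_mul_div_left _ _ hL1,
      Nat.mod_eq_of_lt (show s + v < L1 by omega), Nat.mod_eq_of_lt (show s < L1 by omega),
      Nat.div_eq_of_lt (show s + v < L1 by omega), Nat.div_eq_of_lt (show s < L1 by omega),
      Nat.zero_add, map_mul]
    ring
  rw [Finset.sum_congr rfl (fun q _ => hsplit q),
    Finset.sum_congr rfl (fun s hs => htail s (Finset.mem_range.mp hs)),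
    Finset.sum_add_distrib]
  have hR1 : (∑ i ∈ Finset.range (L1 - v), a (i + v) * (starRingEnd ℂ) (b i)) *
      (∑ i ∈ Finset.range (t + 1 + c2 - t), c (i + t) * (starRingEnd ℂ) (d i))
      = (∑ q ∈ Finset.range c2, ∑ s ∈ Finset.range (L1 - v),
          (a (s + v) * (starRingEnd ℂ) (b s)) * (c (q + t) * (starRingEnd ℂ) (d q)))
        + ∑ s ∈ Finset.range (L1 - v),
          (a (s + v) * (starRingEnd ℂ) (b s)) * (c (c2 + t) * (starRingEnd ℂ) (d c2)) := by
    rw [show t + 1 + c2 - t = c2 + 1 from by omega, Finset.sum_mul_sum, Finset.sum_comm,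
      Finset.sum_range_succ]
  have hR2 : (∑ j ∈ Finset.range v, a j * (starRingEnd ℂ) (b (j + (L1 - v)))) *
      (∑ i ∈ Finset.range (t + 1 + c2 - (t + 1)), c (i + (t + 1)) * (starRingEnd ℂ) (d i))
      = ∑ q ∈ Finset.range c2, ∑ j ∈ Finset.range v,
          (a j * (starRingEnd ℂ) (b (j + (L1 - v)))) *
            (c (q + t + 1) * (starRingEnd ℂ) (d q)) := by
    rw [show t + 1 + c2 - (t + 1) = c2 from by omega, Finset.sum_mul_sum, Finset.sum_comm]
    refine Finset.sum_congr rfl fun q _ => Finset.sum_congr rfl fun j _ => ?_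
    rw [show q + (t + 1) = q + t + 1 from by ring]
  rw [hR1, hR2]
  ring

/-! ### The trivial and prime-power constructions -/

lemma pred_one : Pred 1 1 (fun _ _ _ => 1) := by
  refine ⟨?_, ?_⟩
  · intro μ _ r _ n _
    simp
  · intro μ1 h1 μ2 h2 w hw
    have e1 : μ1 = 0 := by omega
    have e2 : μ2 = 0 := by omega
    have e3 : w = 0 := by omega
    subst e1; subst e2; subst e3
    simp [ccN, rowCorr]

lemma pred_prime_pow (p : ℕ) (hp : p.Prime) (a : ℕ) : ∃ C, Pred p (p ^ a) C := by
  set ω : ℂ := Complex.exp (2 * Real.pi * Complex.I / p) with hω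
  have hprim : IsPrimitiveRoot ω p := Complex.isPrimitiveRoot_exp p hp.ne_zero
  have hωp : ω ^ p = 1 := hprim.pow_eq_one
  have habs : ‖ω‖ = 1 := by
    rw [hω, Complex.norm_exp]
    norm_num [Complex.div_re, Complex.mul_re, Complex.mul_im]
  have hconj : ∀ k : ℕ, ω ^ k * (starRingEnd ℂ) (ω ^ k) = 1 := by
    intro k
    rw [Complex.mul_conj, Complex.normSq_eq_norm_sq, norm_pow, habs]
    norm_num
  induction a with
  | zero =>
    refine ⟨fun μ r _ => ω ^ (μ * r), ⟨?_, ?_⟩⟩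
    · intro μ _ r _ n _
      simp [map_pow, habs]
    · intro μ1 h1 μ2 h2 w hw
      have hw0 : w = 0 := by simp only [pow_zero] at hw; omega
      subst hw0
      have hstep : ccN p (p ^ 0) (fun r _ => ω ^ (μ1 * r)) (fun r _ => ω ^ (μ2 * r)) 0
          = ∑ r ∈ Finset.range p, (ω ^ μ1 * (starRingEnd ℂ) (ω ^ μ2)) ^ r := by
        unfold ccN rowCorr
        simp only [pow_zero, Nat.sub_zero, Finset.sum_range_one, Nat.zero_add]
        refine Finset.sum_congr rfl fun r _ => ?_
        rw [pow_mul, pow_mul, map_pow, ← mul_pow]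
      rw [hstep]
      by_cases he : μ1 = μ2
      · subst he
        rw [hconj μ1, if_pos ⟨rfl, rfl⟩]
        simp
      · have hx1 : ω ^ μ1 * (starRingEnd ℂ) (ω ^ μ2) ≠ 1 := by
          intro hcon
          apply he
          refine hprim.pow_inj h1 h2 ?_
          have h2' := congrArg (· * ω ^ μ2) hcon
          rw [one_mul, mul_assoc] at h2'
          rw [← h2']
          have hcc : (starRingEnd ℂ) (ω ^ μ2) * ω ^ μ2 = 1 := by
            rw [mul_comm]; exact hconj μ2
          rw [hcc, mul_one]
        have hxp : (ω ^ μ1 * (starRingEnd ℂ) (ω ^ μ2)) ^ p = 1 := by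
          rw [mul_pow, ← pow_mul, mul_comm μ1 p, pow_mul, hωp, one_pow, one_mul,
            ← map_pow, ← pow_mul, mul_comm μ2 p, pow_mul, hωp, one_pow, map_one]
        rw [sum_pow_eq_zero hxp hx1, if_neg (fun hcon => he hcon.1)]
  | succ a ih =>
    obtain ⟨B, hB⟩ := ih
    refine ⟨fun μ r n => (ω ^ r) ^ n * B μ (n % p) (n / p), ⟨?_, ?_⟩⟩
    · intro μ hμ r hr n hn
      rw [norm_mul, norm_pow, norm_pow, habs, one_pow, one_pow, one_mul]
      refine hB.1 μ hμ (n % p) (Nat.mod_lt _ hp.pos) (n / p) ?_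
      rw [Nat.div_lt_iff_lt_mul hp.pos, ← pow_succ]
      exact hn
    · intro μ1 h1 μ2 h2 w hw
      have step1 : ccN p (p ^ (a + 1))
          (fun r n => (ω ^ r) ^ n * B μ1 (n % p) (n / p))
          (fun r n => (ω ^ r) ^ n * B μ2 (n % p) (n / p)) w
          = (∑ r ∈ Finset.range p, (ω ^ w) ^ r) *
            rowCorr (p ^ (a + 1)) (fun n => B μ1 (n % p) (n / p))
              (fun n => B μ2 (n % p) (n / p)) w := by
        unfold ccN
        rw [Finset.sum_mul]
        refine Finset.sum_congr rfl fun r _ => ?_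
        rw [rowCorr_phase _ _ _ (hconj r)]
        congr 1
        rw [← pow_mul, ← pow_mul, mul_comm r w]
      rw [step1]
      by_cases hdvd : p ∣ w
      · obtain ⟨t, rfl⟩ := hdvd
        have ht : t < p ^ a := by
          have hlt : p * t < p * p ^ a := by
            calc p * t < p ^ (a + 1) := hw
            _ = p * p ^ a := by rw [pow_succ, Nat.mul_comm]
          exact Nat.lt_of_mul_lt_mul_left hlt
        have hsum : (∑ r ∈ Finset.range p, (ω ^ (p * t)) ^ r) = (p : ℂ) := by
          have h1 : ω ^ (p * t) = 1 := by rw [pow_mul, hωp, one_pow]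
          rw [h1]
          simp
        have hint : rowCorr (p ^ (a + 1)) (fun n => B μ1 (n % p) (n / p))
            (fun n => B μ2 (n % p) (n / p)) (p * t)
            = ccN p (p ^ a) (B μ1) (B μ2) t := by
          rw [show p ^ (a + 1) = p * p ^ a from by rw [pow_succ, Nat.mul_comm]]
          rw [rowCorr_interleave p (p ^ a) t hp.pos]
          rfl
        rw [hsum, hint, hB.2 μ1 h1 μ2 h2 t ht]
        by_cases he : μ1 = μ2 ∧ t = 0
        · obtain ⟨he1, he2⟩ := he
          subst he1; subst he2
          rw [if_pos ⟨rfl, rfl⟩, if_pos ⟨rfl, Nat.mul_zero p⟩]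
          push_cast
          ring
        · have he' : ¬(μ1 = μ2 ∧ p * t = 0) := by
            rintro ⟨hh1, hh2⟩
            refine he ⟨hh1, ?_⟩
            rcases Nat.mul_eq_zero.mp hh2 with h | h
            · exact absurd h hp.pos.ne'
            · exact h
          rw [if_neg he, if_neg he', mul_zero]
      · have hx1 : ω ^ w ≠ 1 := fun hcon => hdvd ((hprim.pow_eq_one_iff_dvd w).mp hcon)
        have hxp : (ω ^ w) ^ p = 1 := by
          rw [← pow_mul, mul_comm w p, pow_mul, hωp, one_pow]
        have hw0 : w ≠ 0 := fun h => hdvd (h ▸ dvd_zero p)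
        rw [sum_pow_eq_zero hxp hx1, zero_mul, if_neg (fun h => hw0 h.2)]

/-! ### Product of two CCCs -/

lemma pred_mul {K1 L1 K2 L2 : ℕ} (hK1 : 0 < K1) (hL1 : 0 < L1) (hK2 : 0 < K2) (hL2 : 0 < L2)
    {C D : ℕ → ℕ → ℕ → ℂ} (hC : Pred K1 L1 C) (hD : Pred K2 L2 D) :
    Pred (K1 * K2) (L1 * L2)
      (fun μ r n => C (μ % K1) (r % K1) (n % L1) * D (μ / K1) (r / K1) (n / L1)) := by
  refine ⟨?_, ?_⟩
  · intro μ hμ r hr n hn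
    rw [norm_mul]
    rw [hC.1 (μ % K1) (Nat.mod_lt _ hK1) (r % K1) (Nat.mod_lt _ hK1) (n % L1) (Nat.mod_lt _ hL1),
      hD.1 (μ / K1) (by rwa [Nat.div_lt_iff_lt_mul hK1, mul_comm K2 K1])
        (r / K1) (by rwa [Nat.div_lt_iff_lt_mul hK1, mul_comm K2 K1])
        (n / L1) (by rwa [Nat.div_lt_iff_lt_mul hL1, mul_comm L2 L1]), one_mul]
  · intro μ1 hμ1 μ2 hμ2 w hw
    obtain ⟨a1, a2, ha1', ha2', rfl⟩ :
        ∃ a1 a2, a1 < K1 ∧ a2 < K2 ∧ μ1 = a1 + K1 * a2 :=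
      ⟨μ1 % K1, μ1 / K1, Nat.mod_lt _ hK1,
        by rwa [Nat.div_lt_iff_lt_mul hK1, mul_comm K2 K1], (Nat.mod_add_div μ1 K1).symm⟩
    obtain ⟨b1, b2, hb1', hb2', rfl⟩ :
        ∃ b1 b2, b1 < K1 ∧ b2 < K2 ∧ μ2 = b1 + K1 * b2 :=
      ⟨μ2 % K1, μ2 / K1, Nat.mod_lt _ hK1,
        by rwa [Nat.div_lt_iff_lt_mul hK1, mul_comm K2 K1], (Nat.mod_add_div μ2 K1).symm⟩
    obtain ⟨v, t, hv, ht, rfl⟩ : ∃ v t, v < L1 ∧ t < L2 ∧ w = v + L1 * t :=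
      ⟨w % L1, w / L1, Nat.mod_lt _ hL1,
        by rwa [Nat.div_lt_iff_lt_mul hL1, mul_comm L2 L1], (Nat.mod_add_div w L1).symm⟩
    simp only [Nat.add_mul_mod_self_left, Nat.add_mul_div_left _ _ hK1,
      Nat.mod_eq_of_lt ha1', Nat.mod_eq_of_lt hb1',
      Nat.div_eq_of_lt ha1', Nat.div_eq_of_lt hb1', Nat.zero_add]
    have step1 : ccN (K1 * K2) (L1 * L2)
        (fun r n => C a1 (r % K1) (n % L1) * D a2 (r / K1) (n / L1))
        (fun r n => C b1 (r % K1) (n % L1) * D b2 (r / K1) (n / L1)) (v + L1 * t)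
        = ∑ r2 ∈ Finset.range K2, ∑ r1 ∈ Finset.range K1,
            rowCorr (L1 * L2) (fun n => C a1 r1 (n % L1) * D a2 r2 (n / L1))
              (fun n => C b1 r1 (n % L1) * D b2 r2 (n / L1)) (v + L1 * t) := by
      unfold ccN
      rw [sum_range_mul'_s12]
      refine Finset.sum_congr rfl fun r2 hr2 => Finset.sum_congr rfl fun r1 hr1 => ?_
      have h1 : (r1 + K1 * r2) % K1 = r1 := by
        rw [Nat.add_mul_mod_self_left, Nat.mod_eq_of_lt (Finset.mem_range.mp hr1)]
      have h2 : (r1 + K1 * r2) / K1 = r2 := by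
        rw [Nat.add_mul_div_left _ _ hK1, Nat.div_eq_of_lt (Finset.mem_range.mp hr1),
          Nat.zero_add]
      simp only [h1, h2]
    rw [step1]
    have step2 : ∀ r2 r1 : ℕ,
        rowCorr (L1 * L2) (fun n => C a1 r1 (n % L1) * D a2 r2 (n / L1))
          (fun n => C b1 r1 (n % L1) * D b2 r2 (n / L1)) (v + L1 * t)
        = rowCorr L1 (C a1 r1) (C b1 r1) v * rowCorr L2 (D a2 r2) (D b2 r2) t +
          (∑ j ∈ Finset.range v, C a1 r1 j * (starRingEnd ℂ) (C b1 r1 (j + (L1 - v)))) *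
            rowCorr L2 (D a2 r2) (D b2 r2) (t + 1) :=
      fun r2 r1 =>
        rowCorr_concat L1 L2 t v hL1 hv ht (C a1 r1) (C b1 r1) (D a2 r2) (D b2 r2)
    simp only [step2, Finset.sum_add_distrib]
    have fact1 : (∑ r2 ∈ Finset.range K2, ∑ r1 ∈ Finset.range K1,
        rowCorr L1 (C a1 r1) (C b1 r1) v * rowCorr L2 (D a2 r2) (D b2 r2) t)
        = ccN K1 L1 (C a1) (C b1) v * ccN K2 L2 (D a2) (D b2) t := by
      unfold ccN
      rw [Finset.sum_mul_sum, Finset.sum_comm]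
    have hz : ccN K2 L2 (D a2) (D b2) (t + 1) = 0 := by
      by_cases hcase : t + 1 < L2
      · rw [hD.2 a2 ha2' b2 hb2' (t + 1) hcase, if_neg (by omega)]
      · exact ccN_of_le (by omega)
    have hz' : (∑ r2 ∈ Finset.range K2, rowCorr L2 (D a2 r2) (D b2 r2) (t + 1)) = 0 := hz
    have fact2 : (∑ r2 ∈ Finset.range K2, ∑ r1 ∈ Finset.range K1,
        (∑ j ∈ Finset.range v, C a1 r1 j * (starRingEnd ℂ) (C b1 r1 (j + (L1 - v)))) *
          rowCorr L2 (D a2 r2) (D b2 r2) (t + 1)) = 0 := by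
      have hrw : ∀ r2 ∈ Finset.range K2, (∑ r1 ∈ Finset.range K1,
          (∑ j ∈ Finset.range v, C a1 r1 j * (starRingEnd ℂ) (C b1 r1 (j + (L1 - v)))) *
            rowCorr L2 (D a2 r2) (D b2 r2) (t + 1))
          = (∑ r1 ∈ Finset.range K1,
              ∑ j ∈ Finset.range v, C a1 r1 j * (starRingEnd ℂ) (C b1 r1 (j + (L1 - v))))
            * rowCorr L2 (D a2 r2) (D b2 r2) (t + 1) := fun r2 _ => by
        rw [Finset.sum_mul]
      rw [Finset.sum_congr rfl hrw, ← Finset.mul_sum, hz', mul_zero]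
    rw [fact1, fact2, add_zero, hC.2 a1 ha1' b1 hb1' v hv, hD.2 a2 ha2' b2 hb2' t ht]
    have hiff1 : a1 + K1 * a2 = b1 + K1 * b2 ↔ (a1 = b1 ∧ a2 = b2) := by
      constructor
      · intro h
        have h1 : (a1 + K1 * a2) % K1 = (b1 + K1 * b2) % K1 := by rw [h]
        rw [Nat.add_mul_mod_self_left, Nat.add_mul_mod_self_left,
          Nat.mod_eq_of_lt ha1', Nat.mod_eq_of_lt hb1'] at h1
        have h2 : (a1 + K1 * a2) / K1 = (b1 + K1 * b2) / K1 := by rw [h]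
        rw [Nat.add_mul_div_left _ _ hK1, Nat.add_mul_div_left _ _ hK1,
          Nat.div_eq_of_lt ha1', Nat.div_eq_of_lt hb1', Nat.zero_add, Nat.zero_add] at h2
        exact ⟨h1, h2⟩
      · rintro ⟨rfl, rfl⟩; rfl
    have hiff2 : v + L1 * t = 0 ↔ (v = 0 ∧ t = 0) := by
      constructor
      · intro h
        rcases Nat.add_eq_zero.mp h with ⟨hh1, hh2⟩
        rcases Nat.mul_eq_zero.mp hh2 with hh3 | hh3
        · omega
        · exact ⟨hh1, hh3⟩
      · rintro ⟨rfl, rfl⟩; simp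
    by_cases hA : a1 = b1 ∧ v = 0
    · rw [if_pos hA]
      by_cases hB : a2 = b2 ∧ t = 0
      · rw [if_pos hB, if_pos ⟨by rw [hA.1, hB.1], hiff2.mpr ⟨hA.2, hB.2⟩⟩]
        push_cast
        ring
      · rw [if_neg hB, mul_zero,
          if_neg (fun hcon => hB ⟨(hiff1.mp hcon.1).2, (hiff2.mp hcon.2).2⟩)]
    · rw [if_neg hA, zero_mul,
        if_neg (fun hcon => hA ⟨(hiff1.mp hcon.1).1, (hiff2.mp hcon.2).1⟩)]

/-! ### Putting it together over all prime factors -/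

lemma radN_pos (n : ℕ) : 0 < radN n :=
  Finset.prod_pos fun p hp => (Nat.prime_of_mem_primeFactors hp).pos

lemma exists_pred : ∀ L : ℕ, 0 < L → ∃ C, Pred (radN L) L C := by
  intro L
  induction L using Nat.strong_induction_on with
  | _ L IH =>
    intro hL
    by_cases hL1 : L = 1
    · subst hL1
      refine ⟨fun _ _ _ => 1, ?_⟩
      have h1 : radN 1 = 1 := by simp [radN]
      rw [h1]
      exact pred_one
    · have hL0 : L ≠ 0 := by omega
      have hp : L.minFac.Prime := Nat.minFac_prime hL1
      set p := L.minFac with hpdef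
      set a := L.factorization p with hadef
      set M := L / p ^ a with hMdef
      have hLM : p ^ a * M = L := Nat.ordProj_mul_ordCompl_eq_self L p
      have hpM : ¬ p ∣ M := Nat.not_dvd_ordCompl hp hL0
      have hMpos : 0 < M := Nat.ordCompl_pos p hL0
      have ha : 0 < a := hp.factorization_pos_of_dvd hL0 (Nat.minFac_dvd L)
      have hMlt : M < L := Nat.div_lt_self (by omega) (Nat.one_lt_pow ha.ne' hp.one_lt)
      obtain ⟨B, hB⟩ := IH M hMlt hMpos
      obtain ⟨A, hA⟩ := pred_prime_pow p hp a
      have hrad : radN L = p * radN M := by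
        unfold radN
        rw [← hLM, Nat.primeFactors_mul (pow_ne_zero a hp.pos.ne') hMpos.ne',
          Nat.primeFactors_prime_pow ha.ne' hp, ← Finset.insert_eq,
          Finset.prod_insert (fun hmem => hpM (Nat.dvd_of_mem_primeFactors hmem))]
      have hmain := pred_mul hp.pos (pow_pos hp.pos a) (radN_pos M) hMpos hA hB
      rw [hrad, ← hLM]
      exact ⟨_, hmain⟩

/-! ### Converting integer shifts to natural shifts -/

lemma codeCorr_coe (M L : ℕ) (C D : ℕ → ℕ → ℂ) (u : ℕ) :
    codeCorr M L C D (u : ℤ) = ccN M L C D u := by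
  unfold codeCorr ccN aCorr rowCorr
  simp [Int.toNat_natCast]

lemma codeCorr_neg_coe (M L : ℕ) (C D : ℕ → ℕ → ℂ) (u : ℕ) (hu : 0 < u) :
    codeCorr M L C D (-(u : ℤ)) = (starRingEnd ℂ) (ccN M L D C u) := by
  unfold codeCorr ccN aCorr rowCorr
  have h1 : ¬ (0:ℤ) ≤ -(u:ℤ) := by omega
  rw [map_sum]
  refine Finset.sum_congr rfl fun ν _ => ?_
  rw [if_neg h1, neg_neg, Int.toNat_natCast, map_sum]
  refine Finset.sum_congr rfl fun i _ => ?_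
  rw [map_mul, Complex.conj_conj]
  ring

/-- for every `L ≥ 2` there is a `(K,K,L)`-CCC with unimodular entries,
where `K = rad(L)` is the product of the distinct primes dividing `L`. -/
theorem statement12 (L : ℕ) (hL : 2 ≤ L) :
    ∃ C : ℕ → ℕ → ℕ → ℂ,
      (∀ μ < radN L, ∀ r < radN L, ∀ n < L, ‖C μ r n‖ = 1) ∧
      (∀ μ < radN L, codeCorr (radN L) L (C μ) (C μ) 0 = ((radN L : ℕ) : ℂ) * (L : ℂ)) ∧
      (∀ μ < radN L, ∀ u : ℤ, u ≠ 0 → u.natAbs < L →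
        codeCorr (radN L) L (C μ) (C μ) u = 0) ∧
      (∀ μ₁ < radN L, ∀ μ₂ < radN L, μ₁ ≠ μ₂ → ∀ u : ℤ, u.natAbs < L →
        codeCorr (radN L) L (C μ₁) (C μ₂) u = 0) := by
  obtain ⟨C, hC⟩ := exists_pred L (by omega)
  refine ⟨C, hC.1, ?_, ?_, ?_⟩
  · intro μ hμ
    rw [show (0:ℤ) = ((0:ℕ):ℤ) from by norm_num, codeCorr_coe,
      hC.2 μ hμ μ hμ 0 (by omega), if_pos ⟨rfl, rfl⟩]
    push_cast
    ring
  · intro μ hμ u hu0 hlt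
    rcases lt_trichotomy u 0 with hneg | hzero | hpos
    · have hu : u = -(((-u).toNat : ℕ) : ℤ) := by omega
      rw [hu, codeCorr_neg_coe _ _ _ _ _ (by omega)]
      have hwlt : (-u).toNat < L := by omega
      rw [hC.2 μ hμ μ hμ _ hwlt, if_neg (by omega)]
      simp
    · exact absurd hzero hu0
    · have hu : u = ((u.toNat : ℕ) : ℤ) := by omega
      rw [hu, codeCorr_coe]
      have hwlt : u.toNat < L := by omega
      rw [hC.2 μ hμ μ hμ _ hwlt, if_neg (by omega)]
  · intro μ1 hμ1 μ2 hμ2 hne u hlt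
    rcases lt_trichotomy u 0 with hneg | hzero | hpos
    · have hu : u = -(((-u).toNat : ℕ) : ℤ) := by omega
      rw [hu, codeCorr_neg_coe _ _ _ _ _ (by omega)]
      have hwlt : (-u).toNat < L := by omega
      rw [hC.2 μ2 hμ2 μ1 hμ1 _ hwlt, if_neg (fun hcon => hne hcon.1.symm)]
      simp
    · subst hzero
      rw [show (0:ℤ) = ((0:ℕ):ℤ) from by norm_num, codeCorr_coe,
        hC.2 μ1 hμ1 μ2 hμ2 0 (by omega), if_neg (fun hcon => hne hcon.1)]
    · have hu : u = ((u.toNat : ℕ) : ℤ) := by omega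
      rw [hu, codeCorr_coe]
      have hwlt : u.toNat < L := by omega
      rw [hC.2 μ1 hμ1 μ2 hμ2 _ hwlt, if_neg (fun hcon => hne hcon.1)]
end
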